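/- arXiv:2106.11502 — 2 statements merged into one kernel-verified Lean document; each statement's English description precedes it below -/
import Mathlib

section
/- The Beat Path voting method violates positive involvement: there exists a profile P, a candidate x ∈ BeatPath(P), and a profile P' obtained from P by adding one new voter whose ballot ranks x in first place, such that x ∉ BeatPath(P'). (A witness: an 11-voter profile on {a,b,c,d} whose margin graph has edges a→b with margin 1, a→d with margin 1, b→d with margin 3, c→b with margin 3, c→a with margin 1, d→c with margin 3, in which all of a,b,c,d are Beat Path winners; adding a voter with ballot bacd yields BeatPath winner set {a}, so b loses.) -/
open scoped Classical

/-- `r` is a strict linear order on the finite set `X`, relating only members of `X`. -/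
def IsLinOn (X : Finset ℕ) (r : ℕ → ℕ → Prop) : Prop :=
  (∀ a b, r a b → a ∈ X ∧ b ∈ X) ∧
  (∀ a, ¬ r a a) ∧
  (∀ a b c, r a b → r b c → r a c) ∧
  (∀ a ∈ X, ∀ b ∈ X, a ≠ b → r a b ∨ r b a)

/-- A profile assigns to each voter in a nonempty finite set of voters a strict linear
order (ballot) on a nonempty finite set of candidates.  Voters and candidates are both
drawn from the infinite set `ℕ`. -/
structure Profile where
  voters : Finset ℕ
  cands : Finset ℕ
  voters_nonempty : voters.Nonempty
  cands_nonempty : cands.Nonempty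
  ballot : ℕ → ℕ → ℕ → Prop
  ballot_lin : ∀ i ∈ voters, IsLinOn cands (ballot i)

/-- `F` is a voting method: it assigns to each profile a nonempty set of winners
among the candidates of the profile. -/
def VotingMethod (F : Profile → Finset ℕ) : Prop :=
  ∀ P : Profile, (F P).Nonempty ∧ F P ⊆ P.cands

/-- The ballot `r` ranks `x` in first place among the candidates in `X`. -/
def RanksFirst (X : Finset ℕ) (r : ℕ → ℕ → Prop) (x : ℕ) : Prop :=
  x ∈ X ∧ ∀ y ∈ X, y ≠ x → r x y

/-- `P'` is obtained from `P` by adding one new voter `j` whose ballot ranks `x` in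
first place. -/
def AddVoter (P P' : Profile) (j x : ℕ) : Prop :=
  P'.cands = P.cands ∧ j ∉ P.voters ∧ P'.voters = insert j P.voters ∧
  (∀ i ∈ P.voters, ∀ a b, (P'.ballot i a b ↔ P.ballot i a b)) ∧
  RanksFirst P.cands (P'.ballot j) x

/-- `F` satisfies positive involvement (PI). -/
def SatisfiesPI (F : Profile → Finset ℕ) : Prop :=
  ∀ (P P' : Profile) (j x : ℕ), x ∈ F P → AddVoter P P' j x → x ∈ F P'

/-- The margin of `a` over `b` in the profile `P`. -/
noncomputable def marginP (P : Profile) (a b : ℕ) : ℤ :=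
  ((P.voters.filter (fun i => P.ballot i a b)).card : ℤ) -
    ((P.voters.filter (fun i => P.ballot i b a)).card : ℤ)

/-- `l` is a path from `a` to `b` in `P`: a sequence of distinct candidates starting at
`a` and ending at `b` with a positive margin along each step. -/
def IsPath (P : Profile) (a b : ℕ) (l : List ℕ) : Prop :=
  l.head? = some a ∧ l.getLast? = some b ∧ l.Nodup ∧
  (∀ x ∈ l, x ∈ P.cands) ∧ l.Chain' (fun u v => 0 < marginP P u v)

/-- The strength of a path: the minimal margin along its steps. -/
noncomputable def pathStrength (P : Profile) (l : List ℕ) : WithTop ℤ :=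
  ((l.zip l.tail).map (fun p => marginP P p.1 p.2)).minimum

/-- `a` defeats `b` according to Beat Path: the strength of the strongest path from `a`
to `b` exceeds the strength of the strongest path from `b` to `a`, i.e., there is a path
from `a` to `b` stronger than every path from `b` to `a`. -/
def bpDefeats (P : Profile) (a b : ℕ) : Prop :=
  ∃ p : List ℕ, IsPath P a b p ∧
    ∀ q : List ℕ, IsPath P b a q → pathStrength P q < pathStrength P p

/-- The Beat Path winners: the undefeated candidates. -/
noncomputable def BeatPath (P : Profile) : Finset ℕ :=
  P.cands.filter (fun x => ¬ ∃ y ∈ P.cands, bpDefeats P y x)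

/-! ### Witness construction -/

/-- Rank table: `rk i c` is the rank (0 = best) that voter `i` gives to candidate `c`. -/
def rk : ℕ → ℕ → ℕ
  | 0, 0 => 2 | 0, 1 => 1 | 0, 2 => 0 | 0, 3 => 3
  | 1, 0 => 3 | 1, 1 => 0 | 1, 2 => 2 | 1, 3 => 1
  | 2, 0 => 0 | 2, 1 => 3 | 2, 2 => 2 | 2, 3 => 1
  | 3, 0 => 3 | 3, 1 => 0 | 3, 2 => 2 | 3, 3 => 1
  | 4, 0 => 0 | 4, 1 => 3 | 4, 2 => 2 | 4, 3 => 1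
  | 5, 0 => 3 | 5, 1 => 1 | 5, 2 => 0 | 5, 3 => 2
  | 6, 0 => 1 | 6, 1 => 3 | 6, 2 => 2 | 6, 3 => 0
  | 7, 0 => 3 | 7, 1 => 0 | 7, 2 => 2 | 7, 3 => 1
  | 8, 0 => 0 | 8, 1 => 1 | 8, 2 => 2 | 8, 3 => 3
  | 9, 0 => 1 | 9, 1 => 2 | 9, 2 => 0 | 9, 3 => 3
  | 10, 0 => 0 | 10, 1 => 3 | 10, 2 => 2 | 10, 3 => 1
  | 11, 0 => 1 | 11, 1 => 0 | 11, 2 => 2 | 11, 3 => 3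
  | _, c => c

def cand4 : Finset ℕ := {0, 1, 2, 3}

def bal (i x y : ℕ) : Prop := x ∈ cand4 ∧ y ∈ cand4 ∧ rk i x < rk i y

instance balDec (i x y : ℕ) : Decidable (bal i x y) :=
  inferInstanceAs (Decidable (x ∈ cand4 ∧ y ∈ cand4 ∧ rk i x < rk i y))

lemma rk_total : ∀ i < 12, ∀ a ∈ cand4, ∀ b ∈ cand4, a ≠ b →
    rk i a < rk i b ∨ rk i b < rk i a := by decide

lemma bal_lin {i : ℕ} (hi : i < 12) : IsLinOn cand4 (bal i) := by
  refine ⟨fun a b h => ⟨h.1, h.2.1⟩, fun a h => lt_irrefl _ h.2.2,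
    fun a b c h1 h2 => ⟨h1.1, h2.2.1, lt_trans h1.2.2 h2.2.2⟩,
    fun a ha b hb hab => ?_⟩
  rcases rk_total i hi a ha b hb hab with h | h
  · exact Or.inl ⟨ha, hb, h⟩
  · exact Or.inr ⟨hb, ha, h⟩

noncomputable def P0 : Profile where
  voters := Finset.range 11
  cands := cand4
  voters_nonempty := ⟨0, by decide⟩
  cands_nonempty := ⟨0, by decide⟩
  ballot := bal
  ballot_lin := fun i hi =>
    bal_lin (lt_of_lt_of_le (Finset.mem_range.mp hi) (by norm_num))

noncomputable def P1 : Profile where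
  voters := Finset.range 12
  cands := cand4
  voters_nonempty := ⟨0, by decide⟩
  cands_nonempty := ⟨0, by decide⟩
  ballot := bal
  ballot_lin := fun i hi => bal_lin (Finset.mem_range.mp hi)

lemma marginP0_eq (x y : ℕ) :
    marginP P0 x y = (((Finset.range 11).filter (fun i => bal i x y)).card : ℤ) -
      (((Finset.range 11).filter (fun i => bal i y x)).card : ℤ) := by
  simp only [marginP, P0]
  congr

lemma marginP1_eq (x y : ℕ) :
    marginP P1 x y = (((Finset.range 12).filter (fun i => bal i x y)).card : ℤ) -
      (((Finset.range 12).filter (fun i => bal i y x)).card : ℤ) := by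
  simp only [marginP, P1]
  congr

-- exact margin values needed
lemma m13 : marginP P0 1 3 = 3 := by rw [marginP0_eq]; decide
lemma m32 : marginP P0 3 2 = 3 := by rw [marginP0_eq]; decide
lemma m20 : marginP P0 2 0 = 1 := by rw [marginP0_eq]; decide
lemma m03' : marginP P1 0 3 = 2 := by rw [marginP1_eq]; decide
lemma m32' : marginP P1 3 2 = 2 := by rw [marginP1_eq]; decide
lemma m21' : marginP P1 2 1 = 2 := by rw [marginP1_eq]; decide

-- margin bounds
lemma bound0 : ∀ z ∈ cand4, marginP P0 0 z ≤ 1 := by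
  intro z hz; fin_cases hz <;> (rw [marginP0_eq]; decide)
lemma bound2 : ∀ z ∈ cand4, marginP P0 2 z ≤ 3 := by
  intro z hz; fin_cases hz <;> (rw [marginP0_eq]; decide)
lemma bound3 : ∀ z ∈ cand4, marginP P0 3 z ≤ 3 := by
  intro z hz; fin_cases hz <;> (rw [marginP0_eq]; decide)
lemma bound_into0 : ∀ u ∈ cand4, marginP P1 u 0 ≤ 0 := by
  intro u hu; fin_cases hu <;> (rw [marginP1_eq]; decide)

/-! ### Generic path lemmas -/

lemma strength_le_head (P : Profile) (x y : ℕ) (rest : List ℕ) :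
    pathStrength P (x :: y :: rest) ≤ (marginP P x y : WithTop ℤ) := by
  apply List.minimum_le_of_mem'
  simp

lemma path_decomp {P : Profile} {a b : ℕ} {l : List ℕ}
    (h : IsPath P a b l) (hab : a ≠ b) :
    ∃ z rest, l = a :: z :: rest ∧ z ∈ P.cands := by
  obtain ⟨h1, h2, _, h4, _⟩ := h
  match l, h1, h2 with
  | [x], h1, h2 =>
    simp only [List.head?_cons, Option.some.injEq] at h1
    simp only [List.getLast?_singleton, Option.some.injEq] at h2
    exact absurd (h1.symm.trans h2) hab
  | x :: y :: rest, h1, h2 =>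
    simp only [List.head?_cons, Option.some.injEq] at h1
    exact ⟨y, rest, by rw [h1], h4 y (by simp)⟩

lemma chain_last {R : ℕ → ℕ → Prop} (l : List ℕ) (v : ℕ)
    (hc : l.Chain' R) (hl : l.getLast? = some v) (h2 : 2 ≤ l.length) :
    ∃ w ∈ l, R w v := by
  induction l with
  | nil => simp at h2
  | cons x t ih =>
    cases t with
    | nil => simp at h2
    | cons y rest =>
      cases rest with
      | nil =>
        simp only [List.getLast?_cons_cons, List.getLast?_singleton,
          Option.some.injEq] at hl
        exact ⟨x, by simp, hl ▸ (List.isChain_cons_cons.mp hc).1⟩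
      | cons z rs =>
        obtain ⟨w, hw, hR⟩ := ih (List.isChain_cons_cons.mp hc).2
          (by rw [← List.getLast?_cons_cons (a := x)]; exact hl)
          (by simp)
        exact ⟨w, List.mem_cons_of_mem _ hw, hR⟩

lemma not_bpDefeats_self (P : Profile) (y : ℕ) : ¬ bpDefeats P y y := by
  rintro ⟨p, hp, hall⟩
  exact lt_irrefl _ (hall p hp)

lemma not_defeat_helper (P : Profile) (y b : ℕ) (hyb : y ≠ b) (s : ℤ)
    (hbound : ∀ z ∈ P.cands, marginP P y z ≤ s)
    (q : List ℕ) (hq : IsPath P b y q)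
    (hqs : (s : WithTop ℤ) ≤ pathStrength P q) :
    ¬ bpDefeats P y b := by
  rintro ⟨p, hp, hall⟩
  obtain ⟨z, rest, hpe, hz⟩ := path_decomp hp hyb
  have h1 : pathStrength P p ≤ (s : WithTop ℤ) := by
    rw [hpe]
    refine le_trans (strength_le_head P y z rest) ?_
    exact_mod_cast hbound z hz
  exact lt_irrefl _ (lt_of_le_of_lt hqs (lt_of_lt_of_le (hall q hq) h1))

/-! ### Facts about the two profiles -/

lemma mem_cand4_P0 {x : ℕ} (hx : x ∈ ([1, 3, 2, 0] : List ℕ)) : x ∈ P0.cands := by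
  show x ∈ cand4
  fin_cases hx <;> decide

lemma path_q0 : IsPath P0 1 0 [1, 3, 2, 0] :=
  ⟨rfl, rfl, by decide, fun x hx => mem_cand4_P0 hx, by
    simp only [List.Chain', List.isChain_cons_cons, List.isChain_singleton, m13, m32, m20, and_true]
    norm_num⟩

lemma path_q2 : IsPath P0 1 2 [1, 3, 2] :=
  ⟨rfl, rfl, by decide, fun x hx => mem_cand4_P0 (by fin_cases hx <;> simp), by
    simp only [List.Chain', List.isChain_cons_cons, List.isChain_singleton, m13, m32, and_true]
    norm_num⟩

lemma path_q3 : IsPath P0 1 3 [1, 3] :=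
  ⟨rfl, rfl, by decide, fun x hx => mem_cand4_P0 (by fin_cases hx <;> simp), by
    simp only [List.Chain', List.isChain_cons_cons, List.isChain_singleton, m13, and_true]
    norm_num⟩

lemma ps_q0 : pathStrength P0 [1, 3, 2, 0] = (1 : WithTop ℤ) := by
  show ([marginP P0 1 3, marginP P0 3 2, marginP P0 2 0]).minimum = (1 : WithTop ℤ)
  rw [m13, m32, m20]
  decide

lemma ps_q2 : pathStrength P0 [1, 3, 2] = (3 : WithTop ℤ) := by
  show ([marginP P0 1 3, marginP P0 3 2]).minimum = (3 : WithTop ℤ)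
  rw [m13, m32]
  decide

lemma ps_q3 : pathStrength P0 [1, 3] = (3 : WithTop ℤ) := by
  show ([marginP P0 1 3]).minimum = (3 : WithTop ℤ)
  rw [m13]
  decide

lemma b_in_BeatPath_P0 : (1 : ℕ) ∈ BeatPath P0 := by
  refine Finset.mem_filter.mpr ⟨by show (1:ℕ) ∈ cand4; decide, ?_⟩
  rintro ⟨y, hy, hd⟩
  have hy4 : y ∈ cand4 := hy
  fin_cases hy4
  · exact not_defeat_helper P0 0 1 (by norm_num) 1 bound0 _ path_q0 (le_of_eq ps_q0.symm) hd
  · exact not_bpDefeats_self P0 1 hd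
  · exact not_defeat_helper P0 2 1 (by norm_num) 3 bound2 _ path_q2 (le_of_eq ps_q2.symm) hd
  · exact not_defeat_helper P0 3 1 (by norm_num) 3 bound3 _ path_q3 (le_of_eq ps_q3.symm) hd

lemma no_path_1_0 (q : List ℕ) : ¬ IsPath P1 1 0 q := by
  rintro ⟨h1, h2, _, h4, h5⟩
  have hlen : 2 ≤ q.length := by
    match q, h1, h2 with
    | [x], h1, h2 =>
      simp only [List.head?_cons, Option.some.injEq] at h1
      simp only [List.getLast?_singleton, Option.some.injEq] at h2
      omega
    | x :: y :: rest, _, _ => simp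
  obtain ⟨w, hw, hR⟩ := chain_last q 0 h5 h2 hlen
  have hw4 : w ∈ cand4 := h4 w hw
  exact absurd hR (not_lt.mpr (bound_into0 w hw4))

lemma path_p1 : IsPath P1 0 1 [0, 3, 2, 1] :=
  ⟨rfl, rfl, by decide, fun x hx => by
      show x ∈ cand4; fin_cases hx <;> decide, by
    simp only [List.Chain', List.isChain_cons_cons, List.isChain_singleton, m03', m32', m21', and_true]
    norm_num⟩

lemma b_defeated_P1 : bpDefeats P1 0 1 :=
  ⟨[0, 3, 2, 1], path_p1, fun q hq => absurd hq (no_path_1_0 q)⟩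

lemma b_not_in_BeatPath_P1 : (1 : ℕ) ∉ BeatPath P1 := by
  intro h
  exact (Finset.mem_filter.mp h).2 ⟨0, by show (0:ℕ) ∈ cand4; decide, b_defeated_P1⟩

lemma addVoter_witness : AddVoter P0 P1 11 1 := by
  refine ⟨rfl, by decide, ?_, fun i _ a b => Iff.rfl, ?_, ?_⟩
  · show Finset.range 12 = insert 11 (Finset.range 11)
    exact Finset.range_add_one
  · show (1 : ℕ) ∈ cand4; decide
  · show ∀ y ∈ cand4, y ≠ 1 → bal 11 1 y; decide

theorem beatPath_violates_PI :
    ∃ (P P' : Profile) (j x : ℕ),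
      x ∈ BeatPath P ∧ AddVoter P P' j x ∧ x ∉ BeatPath P' :=
  ⟨P0, P1, 11, 1, b_in_BeatPath_P0, addVoter_witness, b_not_in_BeatPath_P1⟩
end

section
/- The Simplified Bucklin voting method violates positive involvement: there exists a profile P, a candidate x ∈ SimplifiedBucklin(P), and a profile P' obtained from P by adding one new voter whose ballot ranks x in first place, such that x ∉ SimplifiedBucklin(P'). (A witness: P is the 4-voter profile on candidates {a,b,c,d,e} with ballots abced, aecbd, becda, cdabe, in which SimplifiedBucklin(P) = {a,c}; adding a voter with ballot cebda yields SimplifiedBucklin(P') = {e}.) -/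
open scoped Classical

/-- The rank of `x` in the ballot `r` on the candidate set `X`:
one plus the number of candidates ranked above `x`. -/
noncomputable def rankOf (X : Finset ℕ) (r : ℕ → ℕ → Prop) (x : ℕ) : ℕ :=
  (X.filter (fun b => r b x)).card + 1

/-- The number of voters of `P` who rank `x` in `n`-th place or higher. -/
noncomputable def countRank (P : Profile) (n : ℕ) (x : ℕ) : ℕ :=
  (P.voters.filter (fun i => rankOf P.cands (P.ballot i) x ≤ n)).card

/-- `x` is an `n`-th level majority winner in `P`. -/
noncomputable def nthMaj (P : Profile) (n : ℕ) (x : ℕ) : Prop :=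
  2 * countRank P n x > P.voters.card

/-- The smallest positive `k` for which there is a `k`-th level majority winner. -/
noncomputable def bucklinLevel (P : Profile) : ℕ :=
  sInf {n : ℕ | 0 < n ∧ ∃ x ∈ P.cands, nthMaj P n x}

/-- The Simplified Bucklin winners: where `k` is the smallest level at which some
candidate is a `k`-th level majority winner, all `k`-th level majority winners. -/
noncomputable def SimplifiedBucklin (P : Profile) : Finset ℕ :=
  P.cands.filter (fun x => nthMaj P (bucklinLevel P) x)

def pos : ℕ → ℕ → ℕ
| 0, 0 => 0 | 0, 1 => 1 | 0, 2 => 2 | 0, 3 => 4 | 0, 4 => 3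
| 1, 0 => 0 | 1, 1 => 3 | 1, 2 => 2 | 1, 3 => 4 | 1, 4 => 1
| 2, 0 => 4 | 2, 1 => 0 | 2, 2 => 2 | 2, 3 => 3 | 2, 4 => 1
| 3, 0 => 2 | 3, 1 => 3 | 3, 2 => 0 | 3, 3 => 1 | 3, 4 => 4
| 4, 0 => 4 | 4, 1 => 2 | 4, 2 => 0 | 4, 3 => 3 | 4, 4 => 1
| _, x => x

def B (i a b : ℕ) : Prop := a < 5 ∧ b < 5 ∧ pos i a < pos i b

instance instDecB : ∀ i a b, Decidable (B i a b) := fun i a b => by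
  unfold B; infer_instance

lemma linB : ∀ i < 5, IsLinOn (Finset.range 5) (B i) := by
  intro i hi
  refine ⟨fun a b h => ⟨Finset.mem_range.2 h.1, Finset.mem_range.2 h.2.1⟩,
    fun a h => lt_irrefl _ h.2.2,
    fun a b c h1 h2 => ⟨h1.1, h2.2.1, h1.2.2.trans h2.2.2⟩,
    fun a ha b hb hab => ?_⟩
  rw [Finset.mem_range] at ha hb
  have key : ∀ i < 5, ∀ a < 5, ∀ b < 5, a ≠ b → pos i a < pos i b ∨ pos i b < pos i a := by
    decide
  have : pos i a < pos i b ∨ pos i b < pos i a := key i hi a ha b hb hab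
  rcases this with h | h
  · exact Or.inl ⟨ha, hb, h⟩
  · exact Or.inr ⟨hb, ha, h⟩

def Pw : Profile where
  voters := Finset.range 4
  cands := Finset.range 5
  voters_nonempty := ⟨0, by decide⟩
  cands_nonempty := ⟨0, by decide⟩
  ballot := B
  ballot_lin := fun i hi => linB i (by have := Finset.mem_range.1 hi; omega)

def Pw' : Profile where
  voters := Finset.range 5
  cands := Finset.range 5
  voters_nonempty := ⟨0, by decide⟩
  cands_nonempty := ⟨0, by decide⟩
  ballot := B
  ballot_lin := fun i hi => linB i (Finset.mem_range.1 hi)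

lemma countRank_eq (P : Profile) (n x : ℕ) :
    countRank P n x =
      (P.voters.filter (fun i =>
        (P.cands.filter (fun b => P.ballot i b x)).card + 1 ≤ n)).card := by
  simp only [countRank, rankOf]
  congr 1

lemma nthMaj_Pw (n x : ℕ) :
    nthMaj Pw n x ↔
      2 * (((Finset.range 4).filter (fun i =>
        ((Finset.range 5).filter (fun b => B i b x)).card + 1 ≤ n)).card) > 4 := by
  rw [nthMaj, countRank_eq]
  simp only [Pw, Finset.card_range]; congr!
  funext s; ext i; exact by unfold Finset.filter; simp

lemma nthMaj_Pw' (n x : ℕ) :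
    nthMaj Pw' n x ↔
      2 * (((Finset.range 5).filter (fun i =>
        ((Finset.range 5).filter (fun b => B i b x)).card + 1 ≤ n)).card) > 5 := by
  rw [nthMaj, countRank_eq]
  simp only [Pw', Finset.card_range]; congr!
  funext s; ext i; exact by unfold Finset.filter; simp

lemma no12 : ∀ n, n = 1 ∨ n = 2 → ∀ x ∈ (Finset.range 5), ¬ nthMaj Pw n x := by
  intro n hn x hx
  rw [nthMaj_Pw]
  rcases hn with rfl | rfl
  · revert hx; revert x; decide
  · revert hx; revert x; decide

lemma maj3c : nthMaj Pw 3 2 := by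
  rw [nthMaj_Pw]
  decide

lemma levelPw : bucklinLevel Pw = 3 := by
  have hmem : 3 ∈ {n : ℕ | 0 < n ∧ ∃ x ∈ Pw.cands, nthMaj Pw n x} :=
    ⟨by norm_num, 2, by decide, maj3c⟩
  have hle : bucklinLevel Pw ≤ 3 := Nat.sInf_le hmem
  have hge : 3 ≤ bucklinLevel Pw := by
    by_contra h
    push_neg at h
    have hne : {n : ℕ | 0 < n ∧ ∃ x ∈ Pw.cands, nthMaj Pw n x}.Nonempty := ⟨3, hmem⟩
    have hin := Nat.sInf_mem hne
    obtain ⟨hpos, x, hx, hmaj⟩ := hin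
    have heq : bucklinLevel Pw = sInf {n : ℕ | 0 < n ∧ ∃ x ∈ Pw.cands, nthMaj Pw n x} := rfl
    rw [heq] at h
    have h12 : sInf {n : ℕ | 0 < n ∧ ∃ x ∈ Pw.cands, nthMaj Pw n x} = 1 ∨
        sInf {n : ℕ | 0 < n ∧ ∃ x ∈ Pw.cands, nthMaj Pw n x} = 2 := by omega
    exact no12 _ h12 x hx hmaj
  omega

lemma no1' : ∀ x ∈ (Finset.range 5), ¬ nthMaj Pw' 1 x := by
  intro x hx
  rw [nthMaj_Pw']
  revert hx; revert x; decide

lemma maj2e : nthMaj Pw' 2 4 := by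
  rw [nthMaj_Pw']
  decide

lemma notmaj2c : ¬ nthMaj Pw' 2 2 := by
  rw [nthMaj_Pw']
  decide

lemma levelPw' : bucklinLevel Pw' = 2 := by
  have hmem : 2 ∈ {n : ℕ | 0 < n ∧ ∃ x ∈ Pw'.cands, nthMaj Pw' n x} :=
    ⟨by norm_num, 4, by decide, maj2e⟩
  have hle : bucklinLevel Pw' ≤ 2 := Nat.sInf_le hmem
  have hge : 2 ≤ bucklinLevel Pw' := by
    by_contra h
    push_neg at h
    have hne : {n : ℕ | 0 < n ∧ ∃ x ∈ Pw'.cands, nthMaj Pw' n x}.Nonempty := ⟨2, hmem⟩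
    have hin := Nat.sInf_mem hne
    obtain ⟨hpos, x, hx, hmaj⟩ := hin
    have heq : bucklinLevel Pw' = sInf {n : ℕ | 0 < n ∧ ∃ x ∈ Pw'.cands, nthMaj Pw' n x} := rfl
    rw [heq] at h
    have h1 : sInf {n : ℕ | 0 < n ∧ ∃ x ∈ Pw'.cands, nthMaj Pw' n x} = 1 := by omega
    rw [h1] at hmaj
    exact no1' x hx hmaj
  omega

theorem simplifiedBucklin_violates_PI :
    ∃ (P P' : Profile) (j x : ℕ),
      x ∈ SimplifiedBucklin P ∧ AddVoter P P' j x ∧ x ∉ SimplifiedBucklin P' := by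
  refine ⟨Pw, Pw', 4, 2, ?_, ?_, ?_⟩
  · rw [SimplifiedBucklin, levelPw, Finset.mem_filter]
    exact ⟨by decide, maj3c⟩
  · refine ⟨rfl, by decide, ?_, fun i _ a b => Iff.rfl, ?_⟩
    · show Finset.range 5 = insert 4 (Finset.range 4)
      rw [Finset.range_add_one]
    · refine ⟨by decide, ?_⟩
      intro y hy hne
      have hy5 : y < 5 := Finset.mem_range.1 hy
      have : ∀ y < 5, y ≠ 2 → B 4 2 y := by decide
      exact this y hy5 hne
  · rw [SimplifiedBucklin, levelPw', Finset.mem_filter]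
    intro ⟨_, hmaj⟩
    exact notmaj2c hmaj
end
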